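/- arXiv:1909.04298 — 3 statements merged into one kernel-verified Lean document; each statement's English description precedes it below -/
import Mathlib

section
/- For every x ∈ X and all ordinals α, β with ‖x‖ ≤ α ≤ β < λ, one has x ∈ V_β(x) ⊆ V_α(x); consequently the collection τ := {U ⊆ X : for every x ∈ U there exists α ∈ [‖x‖,λ) with V_α(x) ⊆ U} is a topology on X. -/
universe u v

open Ordinal Set Topology Cardinal

namespace LawsonExample

def Xset (lam : Cardinal.{u}) : Set (Ordinal.{u} → Fin 3) :=
  {x | (∀ γ : Ordinal.{u}, lam.ord ≤ γ → x γ = 2) ∧ {γ : Ordinal.{u} | x γ ≠ 2}.Finite}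

noncomputable def nrm (x : Ordinal.{u} → Fin 3) : Ordinal.{u} :=
  sInf {α | ∀ γ, α ≤ γ → x γ = 2}

noncomputable def Vnbhd (lam : Cardinal.{u}) (x : ↥(Xset lam)) (α : Ordinal.{u}) :
    Set ↥(Xset lam) :=
  if x.1 0 = 2 then {x}
  else if x.1 0 = 1 then
    {y | (∀ γ, 1 ≤ γ → γ < α → y.1 γ = x.1 γ) ∧
         (∀ γ, α ≤ γ → γ < lam.ord → y.1 γ ≠ 1) ∧
         (y.1 0 = 1 ∨ (y.1 0 = 2 ∧ α < nrm y.1))}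
  else
    {y | (∀ γ, 1 ≤ γ → γ < α → y.1 γ = x.1 γ) ∧
         (y.1 0 = 0 ∨ (y.1 0 = 2 ∧ α < nrm y.1 ∧ y.1 (Ordinal.pred (nrm y.1)) = 1))}

def tauSet (lam : Cardinal.{u}) : Set (Set ↥(Xset lam)) :=
  {U | ∀ x ∈ U, ∃ α : Ordinal.{u}, nrm x.1 ≤ α ∧ α < lam.ord ∧ Vnbhd lam x α ⊆ U}

lemma nrm_spec {lam : Cardinal.{u}} (x : ↥(Xset lam)) {γ : Ordinal.{u}}
    (h : nrm x.1 ≤ γ) : x.1 γ = 2 := by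
  have hne : {α : Ordinal.{u} | ∀ γ, α ≤ γ → x.1 γ = 2}.Nonempty :=
    ⟨lam.ord, fun γ hγ => x.2.1 γ hγ⟩
  exact csInf_mem hne γ h

lemma nrm_lt {lam : Cardinal.{u}} (hlam : ℵ₀ ≤ lam) (x : ↥(Xset lam)) :
    nrm x.1 < lam.ord := by
  have hlim : Order.IsSuccLimit (lam.ord) := Cardinal.isSuccLimit_ord hlam
  rcases eq_empty_or_nonempty {γ | x.1 γ ≠ 2} with he | hne
  · have h0 : nrm x.1 ≤ 0 := csInf_le' (fun γ _ => by
      by_contra hc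
      exact (eq_empty_iff_forall_notMem.1 he γ) hc)
    exact lt_of_le_of_lt h0 hlim.pos
  · set m := sSup {γ | x.1 γ ≠ 2} with hm_def
    have hmem : m ∈ {γ | x.1 γ ≠ 2} := hne.csSup_mem x.2.2
    have hm : m < lam.ord := lt_of_not_ge fun h => hmem (x.2.1 m h)
    have hb : nrm x.1 ≤ m + 1 := csInf_le' (fun γ hγ => by
      by_contra hc
      have hle : γ ≤ m := le_csSup x.2.2.bddAbove hc
      rw [Ordinal.add_one_eq_succ] at hγ
      exact absurd hγ (not_le.2 (lt_of_le_of_lt hle (Order.lt_succ m))))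
    have : m + 1 < lam.ord := by
      rw [Ordinal.add_one_eq_succ]; exact hlim.succ_lt hm
    exact lt_of_le_of_lt hb this

lemma fin3_cases (a : Fin 3) : a = 0 ∨ a = 1 ∨ a = 2 := by revert a; decide

lemma mem_Vnbhd_self {lam : Cardinal.{u}} (x : ↥(Xset lam)) {α : Ordinal.{u}}
    (h : nrm x.1 ≤ α) : x ∈ Vnbhd lam x α := by
  rcases fin3_cases (x.1 0) with h0 | h0 | h0
  · have h2 : x.1 0 ≠ 2 := by rw [h0]; decide
    have h1 : x.1 0 ≠ 1 := by rw [h0]; decide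
    rw [Vnbhd, if_neg h2, if_neg h1]
    exact ⟨fun γ _ _ => rfl, Or.inl h0⟩
  · have h2 : x.1 0 ≠ 2 := by rw [h0]; decide
    rw [Vnbhd, if_neg h2, if_pos h0]
    refine ⟨fun γ _ _ => rfl, fun γ hγ _ => ?_, Or.inl h0⟩
    rw [nrm_spec x (le_trans h hγ)]; decide
  · rw [Vnbhd, if_pos h0]; exact rfl

lemma Vnbhd_mono {lam : Cardinal.{u}} (x : ↥(Xset lam)) {α β : Ordinal.{u}}
    (hα : nrm x.1 ≤ α) (hαβ : α ≤ β) : Vnbhd lam x β ⊆ Vnbhd lam x α := by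
  rcases fin3_cases (x.1 0) with h0 | h0 | h0
  · have h2 : x.1 0 ≠ 2 := by rw [h0]; decide
    have h1 : x.1 0 ≠ 1 := by rw [h0]; decide
    rw [Vnbhd, Vnbhd, if_neg h2, if_neg h1, if_neg h2, if_neg h1]
    rintro y ⟨hr, hy⟩
    refine ⟨fun γ h1γ h2γ => hr γ h1γ (lt_of_lt_of_le h2γ hαβ), ?_⟩
    rcases hy with hy | ⟨hy2, hylt, hyp⟩
    · exact Or.inl hy
    · exact Or.inr ⟨hy2, lt_of_le_of_lt hαβ hylt, hyp⟩
  · have h2 : x.1 0 ≠ 2 := by rw [h0]; decide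
    rw [Vnbhd, Vnbhd, if_neg h2, if_pos h0, if_neg h2, if_pos h0]
    rintro y ⟨hr, hns, hy⟩
    have hα1 : 1 ≤ α := by
      by_contra hc
      have : α = 0 := Ordinal.lt_one_iff_zero.1 (not_le.1 hc)
      have : x.1 0 = 2 := nrm_spec x (by rw [← this]; exact hα)
      exact h2 this
    refine ⟨fun γ h1γ h2γ => hr γ h1γ (lt_of_lt_of_le h2γ hαβ), ?_, ?_⟩
    · intro γ hγ hγlt
      by_cases hγβ : β ≤ γ
      · exact hns γ hγβ hγlt
      · have h1γ : 1 ≤ γ := le_trans hα1 hγ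
        rw [hr γ h1γ (not_le.1 hγβ)]
        rw [nrm_spec x (le_trans hα hγ)]
        decide
    · rcases hy with hy | ⟨hy2, hylt⟩
      · exact Or.inl hy
      · exact Or.inr ⟨hy2, lt_of_le_of_lt hαβ hylt⟩
  · rw [Vnbhd, Vnbhd, if_pos h0, if_pos h0]

noncomputable def tau (lam : Cardinal.{u}) (hlam : ℵ₀ ≤ lam) :
    TopologicalSpace ↥(Xset lam) where
  IsOpen U := U ∈ tauSet lam
  isOpen_univ := fun x _ =>
    ⟨nrm x.1, le_rfl, nrm_lt hlam x, subset_univ _⟩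
  isOpen_inter := by
    intro U V hU hV x hx
    obtain ⟨α, hα1, hα2, hα3⟩ := hU x hx.1
    obtain ⟨β, hβ1, hβ2, hβ3⟩ := hV x hx.2
    refine ⟨max α β, le_trans hα1 (le_max_left _ _), max_lt hα2 hβ2, fun y hy => ?_⟩
    exact ⟨hα3 (Vnbhd_mono x hα1 (le_max_left _ _) hy),
           hβ3 (Vnbhd_mono x hβ1 (le_max_right _ _) hy)⟩
  isOpen_sUnion := by
    intro S hS x hx
    obtain ⟨U, hU, hxU⟩ := hx
    obtain ⟨α, hα1, hα2, hα3⟩ := hS U hU x hxU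
    exact ⟨α, hα1, hα2, fun y hy => ⟨U, hU, hα3 hy⟩⟩


/-- The semilattice operation of `X`: pointwise minimum. -/
noncomputable def pmin (lam : Cardinal.{u}) (x y : ↥(Xset lam)) : ↥(Xset lam) :=
  ⟨fun γ => min (x.1 γ) (y.1 γ), by
    constructor
    · intro γ hγ
      show min (x.1 γ) (y.1 γ) = 2
      rw [x.2.1 γ hγ, y.2.1 γ hγ, min_self]
    · refine (x.2.2.union y.2.2).subset fun γ hγ => ?_
      have hγ' : min (x.1 γ) (y.1 γ) ≠ 2 := hγ
      simp only [mem_union, mem_setOf_eq]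
      by_contra hc
      push_neg at hc
      rw [hc.1, hc.2, min_self] at hγ'
      exact hγ' rfl⟩

/-- `B` is a base of the topology `t`: it consists of open sets, and every open set is a
union of members of `B`. -/
def IsBase {X : Type v} (t : TopologicalSpace X) (B : Set (Set X)) : Prop :=
  (∀ U ∈ B, IsOpen[t] U) ∧ ∀ U, IsOpen[t] U → ∃ S ⊆ B, U = ⋃₀ S

/-- The family `ℬ = {V_α(x) : x ∈ X, α ∈ [‖x‖, λ)}`. -/
def Vfamily (lam : Cardinal.{u}) : Set (Set ↥(Xset lam)) :=
  {W | ∃ (x : ↥(Xset lam)) (α : Ordinal.{u}), nrm x.1 ≤ α ∧ α < lam.ord ∧ W = Vnbhd lam x α}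

/-- The weight of a topological space: the smallest cardinality of a base of its topology. -/
noncomputable def weight {X : Type v} (t : TopologicalSpace X) : Cardinal.{v} :=
  sInf {c : Cardinal.{v} | ∃ B : Set (Set X), IsBase t B ∧ c = Cardinal.mk ↥B}

/-- The function `𝟎_β`, with `𝟎_β β = 0` and `𝟎_β γ = 2` for `γ ≠ β`. -/
noncomputable def zeroF (β : Ordinal.{u}) : Ordinal.{u} → Fin 3 :=
  fun γ => if γ = β then 0 else 2

/-- The function `𝟏_β`, with `𝟏_β β = 1` and `𝟏_β γ = 2` for `γ ≠ β`. -/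
noncomputable def oneF (β : Ordinal.{u}) : Ordinal.{u} → Fin 3 :=
  fun γ => if γ = β then 1 else 2

lemma zeroF_mem (lam : Cardinal.{u}) {β : Ordinal.{u}} (h : β < lam.ord) :
    zeroF β ∈ Xset lam := by
  constructor
  · intro γ hγ
    have hne : γ ≠ β := fun e => absurd h (not_lt.2 (e ▸ hγ))
    simp [zeroF, hne]
  · refine (finite_singleton β).subset fun γ hγ => ?_
    simp only [mem_setOf_eq, zeroF] at hγ
    by_contra hc
    simp only [mem_singleton_iff] at hc
    rw [if_neg hc] at hγ
    exact hγ rfl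

lemma oneF_mem (lam : Cardinal.{u}) {β : Ordinal.{u}} (h : β < lam.ord) :
    oneF β ∈ Xset lam := by
  constructor
  · intro γ hγ
    have hne : γ ≠ β := fun e => absurd h (not_lt.2 (e ▸ hγ))
    simp [oneF, hne]
  · refine (finite_singleton β).subset fun γ hγ => ?_
    simp only [mem_setOf_eq, oneF] at hγ
    by_contra hc
    simp only [mem_singleton_iff] at hc
    rw [if_neg hc] at hγ
    exact hγ rfl

/-- `𝟎_β` as an element of `X` (for `β < λ`). -/
noncomputable def zeroE (lam : Cardinal.{u}) {β : Ordinal.{u}} (h : β < lam.ord) :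
    ↥(Xset lam) := ⟨zeroF β, zeroF_mem lam h⟩

/-- `𝟏_β` as an element of `X` (for `β < λ`). -/
noncomputable def oneE (lam : Cardinal.{u}) {β : Ordinal.{u}} (h : β < lam.ord) :
    ↥(Xset lam) := ⟨oneF β, oneF_mem lam h⟩


/-- For every `x ∈ X` and ordinals `‖x‖ ≤ α ≤ β < λ` one has
`x ∈ V_β(x) ⊆ V_α(x)`; consequently the family `τ` of all `U ⊆ X` such that every `x ∈ U`
admits `α ∈ [‖x‖, λ)` with `V_α(x) ⊆ U` is a topology on `X`. -/
theorem mem_Vnbhd_self_and_mono_and_tauSet_topology (lam : Cardinal.{u}) (hlam : ℵ₀ ≤ lam) :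
    (∀ (x : ↥(Xset lam)) (α β : Ordinal.{u}), nrm x.1 ≤ α → α ≤ β → β < lam.ord →
      x ∈ Vnbhd lam x β ∧ Vnbhd lam x β ⊆ Vnbhd lam x α) ∧
    ∃ t : TopologicalSpace ↥(Xset lam),
      ∀ U : Set ↥(Xset lam), IsOpen[t] U ↔ U ∈ tauSet lam := by
  refine ⟨fun x α β hα hαβ _ => ⟨mem_Vnbhd_self x (le_trans hα hαβ), Vnbhd_mono x hα hαβ⟩,
    ⟨tau lam hlam, fun U => Iff.rfl⟩⟩

end LawsonExample
end

section
/- For every x ∈ X and every ordinal α ∈ [‖x‖,λ), the set V_α(x) is open in the topological space (X,τ); that is, for every y ∈ V_α(x) there exists an ordinal β ∈ [‖y‖,λ) with V_β(y) ⊆ V_α(x). -/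
universe u v

open Ordinal Set Topology Cardinal

namespace LawsonExample

/-- **Claim 2.** For every `x ∈ X` and every ordinal `α ∈ [‖x‖, λ)` the set
`V_α(x)` is open in `(X, τ)`; that is, every `y ∈ V_α(x)` admits `β ∈ [‖y‖, λ)` with
`V_β(y) ⊆ V_α(x)`. -/
theorem isOpen_Vnbhd (lam : Cardinal.{u}) (hlam : ℵ₀ ≤ lam) (x : ↥(Xset lam))
    (α : Ordinal.{u}) (hα1 : nrm x.1 ≤ α) (hα2 : α < lam.ord) :
    IsOpen[tau lam hlam] (Vnbhd lam x α) ∧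
    ∀ y ∈ Vnbhd lam x α, ∃ β : Ordinal.{u}, nrm y.1 ≤ β ∧ β < lam.ord ∧
      Vnbhd lam y β ⊆ Vnbhd lam x α := by
  have key : ∀ y ∈ Vnbhd lam x α, ∃ β : Ordinal.{u}, nrm y.1 ≤ β ∧ β < lam.ord ∧
      Vnbhd lam y β ⊆ Vnbhd lam x α := by
    intro y hy
    rcases fin3_cases (x.1 0) with h0 | h0 | h0
    · -- x 0 = 0
      have h2 : x.1 0 ≠ 2 := by rw [h0]; decide
      have h1 : x.1 0 ≠ 1 := by rw [h0]; decide
      rw [Vnbhd, if_neg h2, if_neg h1] at hy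
      obtain ⟨hr, hc⟩ := hy
      rcases hc with hy0 | ⟨hy2, hylt, hyp⟩
      · -- y 0 = 0
        have hy2 : y.1 0 ≠ 2 := by rw [hy0]; decide
        have hy1 : y.1 0 ≠ 1 := by rw [hy0]; decide
        refine ⟨max α (nrm y.1), le_max_right _ _, max_lt hα2 (nrm_lt hlam y), ?_⟩
        intro z hz
        rw [Vnbhd, if_neg hy2, if_neg hy1] at hz
        obtain ⟨hr', hc'⟩ := hz
        rw [Vnbhd, if_neg h2, if_neg h1]
        refine ⟨fun γ h1γ h2γ =>
          (hr' γ h1γ (lt_of_lt_of_le h2γ (le_max_left _ _))).trans (hr γ h1γ h2γ), ?_⟩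
        rcases hc' with hz0 | ⟨hz2, hzlt, hzp⟩
        · exact Or.inl hz0
        · exact Or.inr ⟨hz2, lt_of_le_of_lt (le_max_left _ _) hzlt, hzp⟩
      · -- y 0 = 2
        refine ⟨nrm y.1, le_rfl, nrm_lt hlam y, ?_⟩
        intro z hz
        rw [Vnbhd, if_pos hy2] at hz
        rw [mem_singleton_iff] at hz
        subst hz
        rw [Vnbhd, if_neg h2, if_neg h1]
        exact ⟨hr, Or.inr ⟨hy2, hylt, hyp⟩⟩
    · -- x 0 = 1
      have h2 : x.1 0 ≠ 2 := by rw [h0]; decide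
      rw [Vnbhd, if_neg h2, if_pos h0] at hy
      obtain ⟨hr, hns, hc⟩ := hy
      have hα1' : 1 ≤ α := by
        by_contra hcon
        have hz : α = 0 := Ordinal.lt_one_iff_zero.1 (not_le.1 hcon)
        exact h2 (nrm_spec x (by rw [hz] at hα1; exact hα1))
      rcases hc with hy0 | ⟨hy2, hylt⟩
      · -- y 0 = 1
        have hy2 : y.1 0 ≠ 2 := by rw [hy0]; decide
        refine ⟨max α (nrm y.1), le_max_right _ _, max_lt hα2 (nrm_lt hlam y), ?_⟩
        intro z hz
        rw [Vnbhd, if_neg hy2, if_pos hy0] at hz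
        obtain ⟨hr', hns', hc'⟩ := hz
        rw [Vnbhd, if_neg h2, if_pos h0]
        refine ⟨fun γ h1γ h2γ =>
          (hr' γ h1γ (lt_of_lt_of_le h2γ (le_max_left _ _))).trans (hr γ h1γ h2γ), ?_, ?_⟩
        · intro γ hγ hγlt
          by_cases hγβ : max α (nrm y.1) ≤ γ
          · exact hns' γ hγβ hγlt
          · rw [hr' γ (le_trans hα1' hγ) (not_le.1 hγβ)]
            exact hns γ hγ hγlt
        · rcases hc' with hz0 | ⟨hz2, hzlt⟩
          · exact Or.inl hz0
          · exact Or.inr ⟨hz2, lt_of_le_of_lt (le_max_left _ _) hzlt⟩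
      · -- y 0 = 2
        refine ⟨nrm y.1, le_rfl, nrm_lt hlam y, ?_⟩
        intro z hz
        rw [Vnbhd, if_pos hy2] at hz
        rw [mem_singleton_iff] at hz
        subst hz
        rw [Vnbhd, if_neg h2, if_pos h0]
        exact ⟨hr, hns, Or.inr ⟨hy2, hylt⟩⟩
    · -- x 0 = 2
      rw [Vnbhd, if_pos h0] at hy
      rw [mem_singleton_iff] at hy
      subst hy
      exact ⟨α, hα1, hα2, subset_rfl⟩
  exact ⟨key, key⟩

end LawsonExample
end

section
/- For every x ∈ X and every non-zero ordinal α ∈ [‖x‖,λ), the set V_α(x) is closed in the topological space (X,τ). -/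
universe u v

open Ordinal Set Topology Cardinal

namespace LawsonExample

lemma nrm_gt_of_ne {lam : Cardinal.{u}} (y : ↥(Xset lam)) {γ : Ordinal.{u}}
    (h : y.1 γ ≠ 2) : γ < nrm y.1 :=
  lt_of_not_ge fun hle => h (nrm_spec y hle)

lemma pred_facts {lam : Cardinal.{u}} (y : ↥(Xset lam))
    (h1 : y.1 (Ordinal.pred (nrm y.1)) = 1) {β : Ordinal.{u}} (hβ : β < nrm y.1) :
    β ≤ Ordinal.pred (nrm y.1) ∧ Ordinal.pred (nrm y.1) < nrm y.1 := by
  have hlt : Ordinal.pred (nrm y.1) < nrm y.1 :=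
    nrm_gt_of_ne y (by rw [h1]; decide)
  have hsucc : Order.succ (Ordinal.pred (nrm y.1)) = nrm y.1 :=
    Ordinal.succ_pred_eq_iff_not_isSuccPrelimit.2 (Ordinal.pred_lt_iff_not_isSuccPrelimit.1 hlt)
  have hβ' := hβ
  rw [← hsucc] at hβ'
  exact ⟨Order.lt_succ_iff.1 hβ', hlt⟩

/-- **Claim 5.** For every `x ∈ X` and every non-zero ordinal `α ∈ [‖x‖, λ)`,
the set `V_α(x)` is closed in the topological space `(X, τ)`. -/
theorem isClosed_Vnbhd (lam : Cardinal.{u}) (hlam : ℵ₀ ≤ lam) (x : ↥(Xset lam))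
    (α : Ordinal.{u}) (hα1 : nrm x.1 ≤ α) (hα2 : α < lam.ord) (hα0 : α ≠ 0) :
    IsClosed[tau lam hlam] (Vnbhd lam x α) := by
  have h1α : 1 ≤ α := Ordinal.one_le_iff_ne_zero.2 hα0
  refine @IsClosed.mk _ (tau lam hlam) _ ?_
  show (Vnbhd lam x α)ᶜ ∈ tauSet lam
  intro z hz
  set β := max (nrm z.1) α with hβdef
  have hβz : nrm z.1 ≤ β := le_max_left _ _
  have hαβ : α ≤ β := le_max_right _ _
  have hβlt : β < lam.ord := max_lt (nrm_lt hlam z) hα2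
  have hxβ : nrm x.1 ≤ β := le_trans hα1 hαβ
  refine ⟨β, hβz, hβlt, fun y hy hyA => ?_⟩
  -- hy : y ∈ Vnbhd lam z β, hyA : y ∈ Vnbhd lam x α, hz : z ∉ Vnbhd lam x α. Goal: False
  rcases fin3_cases (x.1 0) with hx0 | hx0 | hx0
  · -- x.1 0 = 0
    have hx2 : x.1 0 ≠ 2 := by rw [hx0]; decide
    have hx1 : x.1 0 ≠ 1 := by rw [hx0]; decide
    rw [Vnbhd, if_neg hx2, if_neg hx1] at hyA hz
    obtain ⟨hr, hd⟩ := hyA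
    rcases fin3_cases (z.1 0) with hz0 | hz0 | hz0
    · -- z.1 0 = 0 : z disagrees with x on [1,α)
      have hz2 : z.1 0 ≠ 2 := by rw [hz0]; decide
      have hz1 : z.1 0 ≠ 1 := by rw [hz0]; decide
      rw [Vnbhd, if_neg hz2, if_neg hz1] at hy
      obtain ⟨hr', _⟩ := hy
      have : ¬ ∀ γ, 1 ≤ γ → γ < α → z.1 γ = x.1 γ := fun h => hz ⟨h, Or.inl hz0⟩
      push_neg at this
      obtain ⟨γ, h1γ, hγα, hne⟩ := this
      exact hne ((hr' γ h1γ (lt_of_lt_of_le hγα hαβ)).symm.trans (hr γ h1γ hγα))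
    · -- z.1 0 = 1
      have hz2 : z.1 0 ≠ 2 := by rw [hz0]; decide
      rw [Vnbhd, if_neg hz2, if_pos hz0] at hy
      obtain ⟨hr', hn1', hd'⟩ := hy
      have hy2 : y.1 0 = 2 ∧ α < nrm y.1 ∧ y.1 (Ordinal.pred (nrm y.1)) = 1 := by
        rcases hd with h0 | h0
        · rcases hd' with h1 | h1
          · rw [h0] at h1; exact absurd h1 (by decide)
          · rw [h0] at h1; exact absurd h1.1 (by decide)
        · exact h0
      obtain ⟨hy02, hαy, hp1⟩ := hy2
      have hβy : β < nrm y.1 := by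
        rcases hd' with h1 | h1
        · rw [hy02] at h1; exact absurd h1 (by decide)
        · exact h1.2
      obtain ⟨hle, hlt⟩ := pred_facts y hp1 hβy
      exact hn1' _ hle (lt_trans hlt (nrm_lt hlam y)) hp1
    · -- z.1 0 = 2 : Vnbhd z = {z}
      rw [Vnbhd, if_pos hz0] at hy
      have : y = z := hy
      exact hz ⟨this ▸ hr, this ▸ hd⟩
  · -- x.1 0 = 1
    have hx2 : x.1 0 ≠ 2 := by rw [hx0]; decide
    rw [Vnbhd, if_neg hx2, if_pos hx0] at hyA hz
    obtain ⟨hr, hn1, hd⟩ := hyA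
    rcases fin3_cases (z.1 0) with hz0 | hz0 | hz0
    · -- z.1 0 = 0
      have hz2 : z.1 0 ≠ 2 := by rw [hz0]; decide
      have hz1 : z.1 0 ≠ 1 := by rw [hz0]; decide
      rw [Vnbhd, if_neg hz2, if_neg hz1] at hy
      obtain ⟨hr', hd'⟩ := hy
      have hy2 : y.1 0 = 2 ∧ β < nrm y.1 ∧ y.1 (Ordinal.pred (nrm y.1)) = 1 := by
        rcases hd' with h0 | h0
        · rcases hd with h1 | h1
          · rw [h0] at h1; exact absurd h1 (by decide)
          · rw [h0] at h1; exact absurd h1.1 (by decide)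
        · exact h0
      obtain ⟨hy02, hβy, hp1⟩ := hy2
      obtain ⟨hle, hlt⟩ := pred_facts y hp1 hβy
      exact hn1 _ (le_trans hαβ hle) (lt_trans hlt (nrm_lt hlam y)) hp1
    · -- z.1 0 = 1
      have hz2 : z.1 0 ≠ 2 := by rw [hz0]; decide
      rw [Vnbhd, if_neg hz2, if_pos hz0] at hy
      obtain ⟨hr', hn1', _⟩ := hy
      have : ¬ ((∀ γ, 1 ≤ γ → γ < α → z.1 γ = x.1 γ) ∧
          (∀ γ, α ≤ γ → γ < lam.ord → z.1 γ ≠ 1)) := fun h => hz ⟨h.1, h.2, Or.inl hz0⟩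
      rw [not_and_or] at this
      rcases this with hP | hQ
      · push_neg at hP
        obtain ⟨γ, h1γ, hγα, hne⟩ := hP
        exact hne ((hr' γ h1γ (lt_of_lt_of_le hγα hαβ)).symm.trans (hr γ h1γ hγα))
      · push_neg at hQ
        obtain ⟨δ, hαδ, hδlt, hδ1'⟩ := hQ
        have hδβ : δ < β := lt_of_lt_of_le (nrm_gt_of_ne z (by rw [hδ1']; decide)) hβz
        have : y.1 δ = 1 := (hr' δ (le_trans h1α hαδ) hδβ).trans hδ1'
        exact hn1 δ hαδ hδlt this
    · rw [Vnbhd, if_pos hz0] at hy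
      have : y = z := hy
      exact hz ⟨this ▸ hr, this ▸ hn1, this ▸ hd⟩
  · -- x.1 0 = 2 : Vnbhd x α = {x}
    rw [Vnbhd, if_pos hx0] at hyA hz
    have hyx : y = x := hyA
    subst hyx
    rcases fin3_cases (z.1 0) with hz0 | hz0 | hz0
    · have hz2 : z.1 0 ≠ 2 := by rw [hz0]; decide
      have hz1 : z.1 0 ≠ 1 := by rw [hz0]; decide
      rw [Vnbhd, if_neg hz2, if_neg hz1] at hy
      obtain ⟨_, hd'⟩ := hy
      rcases hd' with h0 | h0
      · rw [hx0] at h0; exact absurd h0 (by decide)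
      · exact absurd h0.2.1 (not_lt.2 hxβ)
    · have hz2 : z.1 0 ≠ 2 := by rw [hz0]; decide
      rw [Vnbhd, if_neg hz2, if_pos hz0] at hy
      obtain ⟨_, _, hd'⟩ := hy
      rcases hd' with h0 | h0
      · rw [hx0] at h0; exact absurd h0 (by decide)
      · exact absurd h0.2 (not_lt.2 hxβ)
    · rw [Vnbhd, if_pos hz0] at hy
      have : y = z := hy
      exact hz (mem_singleton_iff.2 this.symm)

end LawsonExample
end
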